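/- Let p ≡ 1 (mod 4) be a prime, K ≥ 1 and δ ≥ 0, and suppose the Paley ETF Φ_p has the (K, δ)-RIP. Then for every subset U ⊆ F_p with |U| ≤ K, one has |∑_{u, v ∈ U} χ(u − v)| ≤ δ·√p·|U|. -/

import Mathlib

open scoped Classical
open Finset

noncomputable section

/-- The quadratic character `χ` of `F_p`: `χ 0 = 0`, `χ x = 1` if `x` is a nonzero square,
and `χ x = -1` otherwise. -/
def quadChar (p : ℕ) (x : ZMod p) : ℤ :=
  if x = 0 then 0 else if IsSquare x then 1 else -1

/-- The canonical additive character `ψ` of `F_p`, `ψ x = exp(2πi·x/p)`. -/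
def addChar' (p : ℕ) (x : ZMod p) : ℂ :=
  Complex.exp (2 * Real.pi * Complex.I * (x.val : ℂ) / (p : ℂ))

/-- The set of quadratic residues mod `p` (nonzero squares), as a type. -/
abbrev QRes (p : ℕ) : Type := {b : ZMod p // b ≠ 0 ∧ IsSquare b}

/-- The Paley ETF: rows indexed by `{0} ∪ Q_p` (with `none` the `0`-row),
columns indexed by `F_p ∪ {∞}` (with `none` the `∞`-column). -/
def PaleyETF (p : ℕ) : Matrix (Option (QRes p)) (Option (ZMod p)) ℂ :=
  fun r c =>
    match r, c with
    | none, none => 1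
    | none, some _ => ((1 / Real.sqrt p : ℝ) : ℂ)
    | some _, none => 0
    | some b, some a => ((Real.sqrt (2 / p) : ℝ) : ℂ) * addChar' p (b.1 * a)

/-- `(K, δ)`-restricted isometry property for a complex matrix: for every vector `x`
with at most `K` nonzero entries, `(1-δ)‖x‖² ≤ ‖Φx‖² ≤ (1+δ)‖x‖²`. -/
def HasRIP {M N : Type*} [Fintype M] [Fintype N] (Φ : Matrix M N ℂ) (K δ : ℝ) : Prop :=
  ∀ x : N → ℂ, ((Finset.univ.filter fun n => x n ≠ 0).card : ℝ) ≤ K →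
    (1 - δ) * ∑ n, ‖x n‖ ^ 2 ≤ ∑ m, ‖∑ n, Φ m n * x n‖ ^ 2 ∧
      ∑ m, ‖∑ n, Φ m n * x n‖ ^ 2 ≤ (1 + δ) * ∑ n, ‖x n‖ ^ 2

/-- The Paley graph extractor: `Ext_p(x,y) = 1` if `x = y`, and `(χ(x−y)+1)/2` otherwise
(which is `1` iff `x − y` is a nonzero square, `0` otherwise). -/
def paleyExt (p : ℕ) (x y : ZMod p) : ℕ :=
  if x = y then 1 else if IsSquare (x - y) then 1 else 0

/-- Indicator vector of `U ⊆ F_p` with respect to the column indexing of the Paley ETF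
(entry `0` in the `∞` coordinate). -/
def indic (p : ℕ) (U : Finset (ZMod p)) : Option (ZMod p) → ℂ :=
  fun c => match c with
  | none => 0
  | some a => if a ∈ U then 1 else 0


/-! ### Auxiliary lemmas -/

lemma indic_none (p : ℕ) (U : Finset (ZMod p)) : indic p U none = 0 := rfl

lemma indic_some (p : ℕ) (U : Finset (ZMod p)) (a : ZMod p) :
    indic p U (some a) = if a ∈ U then 1 else 0 := rfl

lemma PaleyETF_nn (p : ℕ) : PaleyETF p none none = 1 := rfl

lemma PaleyETF_ns (p : ℕ) (a : ZMod p) :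
    PaleyETF p none (some a) = ((1 / Real.sqrt p : ℝ) : ℂ) := rfl

lemma PaleyETF_sn (p : ℕ) (b : QRes p) : PaleyETF p (some b) none = 0 := rfl

lemma PaleyETF_ss (p : ℕ) (b : QRes p) (a : ZMod p) :
    PaleyETF p (some b) (some a)
      = ((Real.sqrt (2 / p) : ℝ) : ℂ) * addChar' p (b.1 * a) := rfl

lemma addChar'_eq (p : ℕ) [NeZero p] (x : ZMod p) : addChar' p x = ZMod.stdAddChar x := by
  rw [ZMod.stdAddChar_apply, ZMod.toCircle_apply, addChar']

lemma conj_stdAddChar (p : ℕ) [NeZero p] (x : ZMod p) :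
    (starRingEnd ℂ) (ZMod.stdAddChar x) = ZMod.stdAddChar (-x) := by
  rw [ZMod.stdAddChar_apply, ZMod.stdAddChar_apply, ← Circle.coe_inv_eq_conj,
    ← AddChar.map_neg_eq_inv]


def chiC (p : ℕ) [Fact p.Prime] : MulChar (ZMod p) ℂ :=
  (quadraticChar (ZMod p)).ringHomComp (Int.castRingHom ℂ)

lemma ringChar_ne_two (p : ℕ) [Fact p.Prime] (hp4 : p % 4 = 1) :
    ringChar (ZMod p) ≠ 2 := by rw [ZMod.ringChar_zmod_n]; omega

lemma chiC_ne_one (p : ℕ) [Fact p.Prime] (hp4 : p % 4 = 1) : chiC p ≠ 1 :=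
  (MulChar.ringHomComp_ne_one_iff (Int.cast_injective)).mpr
    (quadraticChar_ne_one (ringChar_ne_two p hp4))

lemma gauss_sq (p : ℕ) [Fact p.Prime] (hp4 : p % 4 = 1) :
    (gaussSum (chiC p) ZMod.stdAddChar) ^ 2 = (p : ℂ) := by
  haveI : NeZero p := ⟨(Fact.out : p.Prime).ne_zero⟩
  rw [gaussSum_sq (chiC_ne_one p hp4) ((quadraticChar_isQuadratic (ZMod p)).comp _)
      (ZMod.isPrimitive_stdAddChar p)]
  rw [chiC, MulChar.ringHomComp_apply, quadraticChar_neg_one (ringChar_ne_two p hp4), ZMod.card,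
    ZMod.χ₄_nat_one_mod_four hp4]
  simp [ZMod.card]

lemma chi_sum (p : ℕ) [Fact p.Prime] (hp4 : p % 4 = 1) (t : ZMod p) :
    ∑ b : ZMod p, chiC p b * ZMod.stdAddChar (b * t)
      = chiC p t * gaussSum (chiC p) ZMod.stdAddChar := by
  rcases eq_or_ne t 0 with ht | ht
  · simp only [ht, mul_zero, AddChar.map_zero_eq_one, mul_one]
    rw [MulChar.sum_eq_zero_of_ne_one (chiC_ne_one p hp4), MulChar.map_zero, zero_mul]
  · have hq : chiC p t * chiC p t = 1 := by
      rw [chiC, MulChar.ringHomComp_apply, ← map_mul, ← sq, quadraticChar_sq_one ht]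
      simp
    have h := gaussSum_mulShift (chiC p) ZMod.stdAddChar (Units.mk0 t ht)
    have h2 : gaussSum (chiC p) (AddChar.mulShift ZMod.stdAddChar (Units.mk0 t ht))
        = ∑ b : ZMod p, chiC p b * ZMod.stdAddChar (b * t) := by
      simp [gaussSum, AddChar.mulShift_apply, mul_comm]
    rw [h2] at h
    calc ∑ b : ZMod p, chiC p b * ZMod.stdAddChar (b * t)
        = (chiC p t * chiC p t) * ∑ b : ZMod p, chiC p b * ZMod.stdAddChar (b * t) := by
          rw [hq, one_mul]
      _ = chiC p t * (chiC p t * ∑ b : ZMod p, chiC p b * ZMod.stdAddChar (b * t)) := by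
          rw [mul_assoc]
      _ = chiC p t * gaussSum (chiC p) ZMod.stdAddChar := by
          simp only [Units.val_mk0] at h
          rw [h]

lemma W_lemma (p : ℕ) [Fact p.Prime] (hp4 : p % 4 = 1) (t : ZMod p) :
    (2 : ℂ) * ∑ b ∈ univ.filter (fun b : ZMod p => b ≠ 0 ∧ IsSquare b), ZMod.stdAddChar (b * t)
      = chiC p t * gaussSum (chiC p) ZMod.stdAddChar + (if t = 0 then (p:ℂ) else 0) - 1 := by
  haveI : NeZero p := ⟨(Fact.out : p.Prime).ne_zero⟩
  have step : ∀ b : ZMod p,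
      (if (b ≠ 0 ∧ IsSquare b) then (2:ℂ) * ZMod.stdAddChar (b * t) else 0)
        = chiC p b * ZMod.stdAddChar (b * t) + ZMod.stdAddChar (b * t)
          - (if b = 0 then (1:ℂ) else 0) * ZMod.stdAddChar (b * t) := by
    intro b
    rcases eq_or_ne b 0 with hb | hb
    · simp [hb, chiC]
    · by_cases hs : IsSquare b <;>
        simp [hb, hs, chiC, MulChar.ringHomComp_apply, quadraticChar_apply, quadraticCharFun] <;>
        ring
  rw [Finset.mul_sum, Finset.sum_filter, Finset.sum_congr rfl (fun b _ => step b)]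
  rw [Finset.sum_sub_distrib, Finset.sum_add_distrib]
  rw [chi_sum p hp4 t, AddChar.sum_mulShift t (ZMod.isPrimitive_stdAddChar p)]
  have : ∑ b : ZMod p, (if b = 0 then (1:ℂ) else 0) * ZMod.stdAddChar (b * t) = 1 := by
    rw [Finset.sum_eq_single 0] <;> simp +contextual
  rw [this, ZMod.card]
  split_ifs <;> simp

lemma quadChar_eq (p : ℕ) [Fact p.Prime] (x : ZMod p) :
    ((quadChar p x : ℤ) : ℂ) = chiC p x := by
  by_cases h : x = 0 <;> by_cases h2 : IsSquare x <;>
    simp [quadChar, chiC, quadraticChar_apply, quadraticCharFun, h, h2]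

/-- **RIP implies a double character-sum bound (key lemma).**
If `Φ_p` has the `(K, δ)`-RIP, then for every `U ⊆ F_p` with `|U| ≤ K`,
`|∑_{u,v∈U} χ(u−v)| ≤ δ·√p·|U|`. -/
theorem paley_rip_char_sum (p : ℕ) [Fact p.Prime] (hp4 : p % 4 = 1)
    (K δ : ℝ) (hK : 1 ≤ K) (hδ : 0 ≤ δ)
    (hRIP : HasRIP (PaleyETF p) K δ)
    (U : Finset (ZMod p)) (hU : (U.card : ℝ) ≤ K) :
    |∑ u ∈ U, ∑ v ∈ U, (quadChar p (u - v) : ℝ)| ≤ δ * Real.sqrt p * (U.card : ℝ) := by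
  haveI : NeZero p := ⟨(Fact.out : p.Prime).ne_zero⟩
  have hppos : (0:ℝ) < p := by exact_mod_cast (Fact.out : p.Prime).pos
  have hp0 : (p:ℂ) ≠ 0 := by exact_mod_cast (Fact.out : p.Prime).ne_zero
  have hsp : 0 < Real.sqrt p := Real.sqrt_pos.mpr hppos
  have hss : Real.sqrt p * Real.sqrt p = p := Real.mul_self_sqrt hppos.le
  -- sparsity and norm of the indicator vector
  have hfilter : (Finset.univ.filter fun n => indic p U n ≠ 0) = U.image some := by
    ext n
    cases n with
    | none => simp [indic_none]
    | some a => by_cases h : a ∈ U <;> simp [indic_some, h]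
  have hsupp : ((Finset.univ.filter fun n => indic p U n ≠ 0).card : ℝ) ≤ K := by
    rw [hfilter, Finset.card_image_of_injective _ (Option.some_injective _)]
    exact hU
  have hnorm : ∑ n, ‖indic p U n‖ ^ 2 = (U.card : ℝ) := by
    rw [Fintype.sum_option]
    simp only [indic_none, indic_some, norm_zero, zero_pow, zero_add, apply_ite Norm.norm,
      norm_one, ite_pow, one_pow]
    simp [Finset.sum_ite_mem]
  obtain ⟨h1, h2⟩ := hRIP (indic p U) hsupp
  rw [hnorm] at h1 h2
  -- the rows of Φ·1_U
  have hrow0 : ∑ n, PaleyETF p none n * indic p U n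
      = ((U.card : ℝ) : ℂ) * ((1 / Real.sqrt p : ℝ) : ℂ) := by
    rw [Fintype.sum_option]
    simp only [PaleyETF_nn, PaleyETF_ns, indic_none, indic_some, mul_zero, zero_add,
      mul_ite, mul_one]
    rw [Finset.sum_ite_mem, Finset.univ_inter, Finset.sum_const, nsmul_eq_mul]
    push_cast
    ring
  have hrowb : ∀ b : QRes p, ∑ n, PaleyETF p (some b) n * indic p U n
      = ((Real.sqrt (2 / p) : ℝ) : ℂ) * ∑ a ∈ U, ZMod.stdAddChar (b.1 * a) := by
    intro b
    rw [Fintype.sum_option]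
    simp only [PaleyETF_sn, PaleyETF_ss, indic_none, indic_some, mul_zero, zero_add,
      mul_ite, mul_one]
    rw [Finset.sum_ite_mem, Finset.univ_inter, Finset.mul_sum]
    exact Finset.sum_congr rfl fun a _ => by rw [addChar'_eq]
  -- the total energy
  have hEeq : ∑ m, ‖∑ n, PaleyETF p m n * indic p U n‖ ^ 2
      = (U.card : ℝ)^2 / p
        + (2/p) * ∑ b : QRes p, ‖∑ a ∈ U, ZMod.stdAddChar (b.1 * a)‖^2 := by
    rw [Fintype.sum_option, hrow0]
    congr 1
    · rw [norm_mul, Complex.norm_real, Complex.norm_real, mul_pow, Real.norm_eq_abs,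
        Real.norm_eq_abs, abs_of_nonneg (by positivity), abs_of_nonneg (by positivity),
        div_pow, one_pow, Real.sq_sqrt hppos.le]
      ring
    · rw [Finset.mul_sum]
      refine Finset.sum_congr rfl fun b _ => ?_
      rw [hrowb b, norm_mul, mul_pow, Complex.norm_real, Real.norm_eq_abs,
        abs_of_nonneg (Real.sqrt_nonneg _), Real.sq_sqrt (by positivity)]
  -- the key complex identity
  set g : ℂ := gaussSum (chiC p) ZMod.stdAddChar with hg
  set T : ℝ := ∑ u ∈ U, ∑ v ∈ U, (quadChar p (u - v) : ℝ) with hT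
  have hTc : ∑ u ∈ U, ∑ v ∈ U, chiC p (u - v) = ((T : ℝ) : ℂ) := by
    rw [hT]
    push_cast
    exact Finset.sum_congr rfl fun u _ => Finset.sum_congr rfl fun v _ =>
      (quadChar_eq p (u - v)).symm
  have key : ((∑ b : QRes p, ‖∑ a ∈ U, ZMod.stdAddChar (b.1 * a)‖^2 : ℝ) : ℂ) * 2
      = g * ((T : ℝ) : ℂ) + (p : ℂ) * (U.card : ℂ) - (U.card : ℂ)^2 := by
    push_cast
    have e1 : ∀ b : QRes p, ((‖∑ a ∈ U, ZMod.stdAddChar (b.1 * a)‖ : ℝ) : ℂ)^2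
        = ∑ u ∈ U, ∑ v ∈ U, ZMod.stdAddChar (b.1 * (u - v)) := by
      intro b
      rw [← Complex.mul_conj', map_sum, Finset.sum_mul_sum]
      refine Finset.sum_congr rfl fun u _ => Finset.sum_congr rfl fun v _ => ?_
      rw [conj_stdAddChar, ← AddChar.map_add_eq_mul]
      congr 1
      ring
    rw [Finset.sum_congr rfl fun b _ => e1 b]
    rw [← Finset.sum_subtype (univ.filter (fun b : ZMod p => b ≠ 0 ∧ IsSquare b))
      (by simp) (fun b => ∑ u ∈ U, ∑ v ∈ U, ZMod.stdAddChar (b * (u - v)))]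
    rw [Finset.sum_comm]
    rw [Finset.sum_mul]
    have e2 : ∀ u ∈ U,
        (∑ b ∈ univ.filter (fun b : ZMod p => b ≠ 0 ∧ IsSquare b),
          ∑ v ∈ U, ZMod.stdAddChar (b * (u - v))) * 2
        = (∑ v ∈ U, chiC p (u - v)) * g + (p : ℂ) - (U.card : ℂ) := by
      intro u hu
      rw [Finset.sum_comm, Finset.sum_mul]
      have e3 : ∀ v ∈ U,
          (∑ b ∈ univ.filter (fun b : ZMod p => b ≠ 0 ∧ IsSquare b),
            ZMod.stdAddChar (b * (u - v))) * 2
          = chiC p (u - v) * g + (if u = v then (p:ℂ) else 0) - 1 := by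
        intro v _
        rw [mul_comm, W_lemma p hp4 (u - v)]
        congr 2
        simp [sub_eq_zero]
      rw [Finset.sum_congr rfl e3, Finset.sum_sub_distrib, Finset.sum_add_distrib,
        Finset.sum_ite_eq, if_pos hu, ← Finset.sum_mul]
      simp
    rw [Finset.sum_congr rfl e2, Finset.sum_sub_distrib, Finset.sum_add_distrib,
      ← Finset.sum_mul, hTc]
    simp only [Finset.sum_const, nsmul_eq_mul]
    ring
  -- deduce a real identity for the energy deviation
  have hEC : ((∑ m, ‖∑ n, PaleyETF p m n * indic p U n‖ ^ 2 : ℝ) : ℂ) * (p : ℂ)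
      = (U.card : ℂ) * (p : ℂ) + g * ((T : ℝ) : ℂ) := by
    rw [hEeq]
    push_cast
    push_cast at key
    field_simp
    linear_combination key
  -- g = ±√p
  have hsqc : ((Real.sqrt p : ℝ) : ℂ)^2 = (p : ℂ) := by
    rw [← Complex.ofReal_pow, Real.sq_sqrt hppos.le]
    push_cast
    rfl
  have hcases : g = ((Real.sqrt p : ℝ) : ℂ) ∨ g = -((Real.sqrt p : ℝ) : ℂ) := by
    have hz : (g - ((Real.sqrt p : ℝ) : ℂ)) * (g + ((Real.sqrt p : ℝ) : ℂ)) = 0 := by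
      linear_combination gauss_sq p hp4 - hsqc
    rcases mul_eq_zero.mp hz with h | h
    · exact Or.inl (sub_eq_zero.mp h)
    · exact Or.inr (eq_neg_of_add_eq_zero_left h)
  -- energy deviation bound from RIP
  have hdev : |∑ m, ‖∑ n, PaleyETF p m n * indic p U n‖ ^ 2 - (U.card : ℝ)| ≤ δ * U.card := by
    rw [abs_le]
    constructor <;> nlinarith [h1, h2]
  -- conclude
  have hreal : Real.sqrt p * |T| ≤ δ * U.card * p := by
    rcases hcases with hgc | hgc
    · have : ((∑ m, ‖∑ n, PaleyETF p m n * indic p U n‖ ^ 2 : ℝ) * p : ℝ)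
          = ((U.card : ℝ) * p + Real.sqrt p * T : ℝ) := by
        have := hEC
        rw [hgc] at this
        exact_mod_cast this
      have habs : |Real.sqrt p * T| ≤ δ * U.card * p := by
        have h5 : Real.sqrt p * T
            = (∑ m, ‖∑ n, PaleyETF p m n * indic p U n‖ ^ 2 - (U.card : ℝ)) * p := by
          linarith [this]
        rw [h5, abs_mul, abs_of_nonneg hppos.le]
        exact mul_le_mul_of_nonneg_right hdev hppos.le
      rwa [abs_mul, abs_of_nonneg (Real.sqrt_nonneg _)] at habs
    · have : ((∑ m, ‖∑ n, PaleyETF p m n * indic p U n‖ ^ 2 : ℝ) * p : ℝ)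
          = ((U.card : ℝ) * p + -Real.sqrt p * T : ℝ) := by
        have := hEC
        rw [hgc] at this
        exact_mod_cast this
      have habs : |Real.sqrt p * T| ≤ δ * U.card * p := by
        have h5 : -(Real.sqrt p * T)
            = (∑ m, ‖∑ n, PaleyETF p m n * indic p U n‖ ^ 2 - (U.card : ℝ)) * p := by
          linarith [this]
        rw [← abs_neg, h5, abs_mul, abs_of_nonneg hppos.le]
        exact mul_le_mul_of_nonneg_right hdev hppos.le
      rwa [abs_mul, abs_of_nonneg (Real.sqrt_nonneg _)] at habs
  have : Real.sqrt p * |T| ≤ Real.sqrt p * (δ * Real.sqrt p * U.card) := by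
    calc Real.sqrt p * |T| ≤ δ * U.card * p := hreal
      _ = Real.sqrt p * (δ * Real.sqrt p * U.card) := by
          linear_combination (-(δ * (U.card : ℝ))) * hss
  exact le_of_mul_le_mul_left this hsp
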